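/- Let n be a positive integer and let A and B be nonzero complex 2×n matrices satisfying the zero-moment-map condition AA* = ½|A|² I₂ and BB* = ½|B|² I₂. Then there exist a real number t > 0 and a unitary n×n matrix U such that B = t · (A U). In other words, the group ℝ₊ × U(n) acts transitively on the nonzero part of μ⁻¹(0) ⊂ Hom(ℂⁿ, ℂ²). (This is the transitivity claim used in the Appendix of the paper to show that the canonical connection on μ⁻¹(0) → M̊_{1,n} is flat.) -/

import Mathlib

open Matrix
open scoped ComplexConjugate

lemma rows_extend (n : ℕ) (P : Matrix (Fin 2) (Fin n) ℂ) (hP : P * Pᴴ = 1) :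
    ∃ bP : OrthonormalBasis (Fin n) ℂ (EuclideanSpace ℂ (Fin n)),
      ∀ (i : Fin 2) (hi : (i : ℕ) < n) (k : Fin n), bP ⟨i, hi⟩ k = P i k := by
  classical
  set v : Fin n → EuclideanSpace ℂ (Fin n) :=
    fun j => if h : (j : ℕ) < 2 then WithLp.toLp 2 (fun k => P ⟨j, h⟩ k) else 0 with hv
  set s : Set (Fin n) := {j | (j : ℕ) < 2} with hs
  have horth : Orthonormal ℂ (s.restrict v) := by
    rw [orthonormal_iff_ite]
    rintro ⟨i, hi⟩ ⟨j, hj⟩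
    have hi' : (i : ℕ) < 2 := hi
    have hj' : (j : ℕ) < 2 := hj
    have hvi : s.restrict v ⟨i, hi⟩ = (WithLp.toLp 2 (fun k => P ⟨i, hi'⟩ k) : EuclideanSpace ℂ (Fin n)) := by
      simp [hv, Set.restrict, hi', (by omega : (i : ℕ) ≤ 1)]
    have hvj : s.restrict v ⟨j, hj⟩ = (WithLp.toLp 2 (fun k => P ⟨j, hj'⟩ k) : EuclideanSpace ℂ (Fin n)) := by
      simp [hv, Set.restrict, hj', (by omega : (j : ℕ) ≤ 1)]
    rw [hvi, hvj, PiLp.inner_apply]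
    simp only [RCLike.inner_apply, PiLp.toLp_apply]
    have hPe := congrFun (congrFun hP ⟨j, hj'⟩) ⟨i, hi'⟩
    simp only [Matrix.mul_apply, Matrix.conjTranspose_apply, Matrix.one_apply] at hPe
    have hsum : ∑ k, (starRingEnd ℂ) (P ⟨i, hi'⟩ k) * P ⟨j, hj'⟩ k
        = ∑ k, P ⟨j, hj'⟩ k * star (P ⟨i, hi'⟩ k) := by
      refine Finset.sum_congr rfl fun k _ => ?_
      rw [Complex.star_def]; ring
    rw [show (∑ k, P ⟨j, hj'⟩ k * (starRingEnd ℂ) (P ⟨i, hi'⟩ k)) = ∑ k, P ⟨j, hj'⟩ k * star (P ⟨i, hi'⟩ k) from rfl, hPe]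
    have hij : ((⟨j, hj'⟩ : Fin 2) = ⟨i, hi'⟩) ↔
        ((⟨i, hi⟩ : s) = ⟨j, hj⟩) := by
      simp [Fin.ext_iff, Subtype.ext_iff, eq_comm]
    simp [hij]
  obtain ⟨bP, hbP⟩ := horth.exists_orthonormalBasis_extension_of_card_eq
    (by simp)
  refine ⟨bP, fun i hi k => ?_⟩
  have hmem : (⟨(i : ℕ), hi⟩ : Fin n) ∈ s := by simpa [hs] using i.isLt
  have h1 := hbP ⟨(i : ℕ), hi⟩ hmem
  rw [h1]
  simp [hv, i.isLt, (by omega : (i : ℕ) ≤ 1)]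

lemma key_lemma (n : ℕ) (P Q : Matrix (Fin 2) (Fin n) ℂ)
    (hP : P * Pᴴ = 1) (hQ : Q * Qᴴ = 1) :
    ∃ U : Matrix (Fin n) (Fin n) ℂ, U ∈ Matrix.unitaryGroup (Fin n) ℂ ∧ Q = P * U := by
  classical
  have h2n : 2 ≤ n := by
    have h1 : (P * Pᴴ).rank = 2 := by rw [hP, Matrix.rank_one]; simp
    have h2 := Matrix.rank_mul_le_left P Pᴴ
    have h3 := Matrix.rank_le_width P
    omega
  obtain ⟨bP, hbP⟩ := rows_extend n P hP
  obtain ⟨bQ, hbQ⟩ := rows_extend n Q hQ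
  set Pm : Matrix (Fin n) (Fin n) ℂ := fun m k => bP m k with hPm
  set Qm : Matrix (Fin n) (Fin n) ℂ := fun m k => bQ m k with hQm
  have hrows : ∀ (b : OrthonormalBasis (Fin n) ℂ (EuclideanSpace ℂ (Fin n)))
      (M : Matrix (Fin n) (Fin n) ℂ), (∀ m k, M m k = b m k) → M * Mᴴ = 1 := by
    intro b M hM
    ext m m'
    have := b.orthonormal
    rw [orthonormal_iff_ite] at this
    have h2 := this m' m
    rw [PiLp.inner_apply] at h2
    simp only [RCLike.inner_apply] at h2
    simp only [Matrix.mul_apply, Matrix.conjTranspose_apply, Matrix.one_apply, hM]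
    have : ∑ k, b m k * star (b m' k) = ∑ k, (starRingEnd ℂ) (b m' k) * b m k := by
      refine Finset.sum_congr rfl fun k _ => ?_
      rw [Complex.star_def]; ring
    rw [show (∑ k, b m k * (starRingEnd ℂ) (b m' k)) = ∑ k, b m k * star (b m' k) from rfl] at h2
    rw [h2]
    by_cases h : m = m' <;> simp [h, eq_comm]
  have hPm1 : Pm * Pmᴴ = 1 := hrows bP Pm fun m k => rfl
  have hQm1 : Qm * Qmᴴ = 1 := hrows bQ Qm fun m k => rfl
  set E : Matrix (Fin 2) (Fin n) ℂ := fun i m => if (m : ℕ) = (i : ℕ) then 1 else 0 with hE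
  have hrow : ∀ (M : Matrix (Fin 2) (Fin n) ℂ) (Mm : Matrix (Fin n) (Fin n) ℂ),
      (∀ (i : Fin 2) (hi : (i : ℕ) < n) (k : Fin n), Mm ⟨i, hi⟩ k = M i k) → M = E * Mm := by
    intro M Mm hMm
    ext i k
    have hi : (i : ℕ) < n := lt_of_lt_of_le i.isLt h2n
    rw [Matrix.mul_apply]
    rw [Finset.sum_eq_single (⟨(i : ℕ), hi⟩ : Fin n)]
    · simp [hE, hMm i hi k]
    · intro m _ hm
      have : (m : ℕ) ≠ (i : ℕ) := fun h => hm (Fin.ext (by simpa using h))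
      simp [hE, this]
    · simp
  have hPE : P = E * Pm := hrow P Pm hbP
  have hQE : Q = E * Qm := hrow Q Qm hbQ
  refine ⟨Pmᴴ * Qm, ?_, ?_⟩
  · rw [Matrix.mem_unitaryGroup_iff]
    show Pmᴴ * Qm * (Pmᴴ * Qm)ᴴ = 1
    rw [Matrix.conjTranspose_mul, Matrix.conjTranspose_conjTranspose,
      Matrix.mul_assoc, ← Matrix.mul_assoc Qm, hQm1, Matrix.one_mul]
    exact mul_eq_one_comm.mp hPm1
  · rw [hPE, hQE, Matrix.mul_assoc, ← Matrix.mul_assoc Pm, hPm1, Matrix.one_mul]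

lemma trace_re_pos {n : ℕ} (M : Matrix (Fin 2) (Fin n) ℂ) (hM : M ≠ 0) :
    0 < ((M * Mᴴ).trace).re := by
  classical
  have htr : (M * Mᴴ).trace = ((∑ i, ∑ j, Complex.normSq (M i j) : ℝ) : ℂ) := by
    rw [Matrix.trace]
    push_cast
    refine Finset.sum_congr rfl fun i _ => ?_
    simp only [Matrix.diag_apply, Matrix.mul_apply, Matrix.conjTranspose_apply]
    refine Finset.sum_congr rfl fun j _ => ?_
    rw [Complex.star_def, Complex.mul_conj]
  rw [htr, Complex.ofReal_re]
  obtain ⟨i, j, hij⟩ : ∃ i j, M i j ≠ 0 := by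
    by_contra h
    push_neg at h
    exact hM (by ext i j; simpa using h i j)
  have hpos : 0 < ∑ j, Complex.normSq (M i j) :=
    Finset.sum_pos' (fun _ _ => Complex.normSq_nonneg _)
      ⟨j, Finset.mem_univ _, Complex.normSq_pos.mpr hij⟩
  refine Finset.sum_pos' (fun _ _ => Finset.sum_nonneg fun _ _ => Complex.normSq_nonneg _)
    ⟨i, Finset.mem_univ _, hpos⟩

/-- Transitivity of `ℝ₊ × U(n)` on the nonzero part of `μ⁻¹(0)`: if `A, B` are nonzero
complex 2×n matrices with `AA* = ½|A|² I₂` and `BB* = ½|B|² I₂`, then `B = t · (A U)`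
for some `t > 0` and some unitary `U ∈ U(n)`. -/
theorem transitive_on_mu_zero (n : ℕ) (hn : 0 < n) (A B : Matrix (Fin 2) (Fin n) ℂ)
    (hA : A ≠ 0) (hB : B ≠ 0)
    (hA0 : A * Aᴴ =
      ((1 / 2 : ℝ) * ((A * Aᴴ).trace).re) • (1 : Matrix (Fin 2) (Fin 2) ℂ))
    (hB0 : B * Bᴴ =
      ((1 / 2 : ℝ) * ((B * Bᴴ).trace).re) • (1 : Matrix (Fin 2) (Fin 2) ℂ)) :
    ∃ t : ℝ, 0 < t ∧ ∃ U : Matrix (Fin n) (Fin n) ℂ,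
      U ∈ Matrix.unitaryGroup (Fin n) ℂ ∧ B = t • (A * U) := by
  classical
  set cA : ℝ := (1 / 2 : ℝ) * ((A * Aᴴ).trace).re with hcA
  set cB : ℝ := (1 / 2 : ℝ) * ((B * Bᴴ).trace).re with hcB
  have hcApos : 0 < cA := by
    have := trace_re_pos A hA; rw [hcA]; linarith
  have hcBpos : 0 < cB := by
    have := trace_re_pos B hB; rw [hcB]; linarith
  set a : ℝ := Real.sqrt cA with ha
  set b : ℝ := Real.sqrt cB with hb
  have hapos : 0 < a := Real.sqrt_pos.mpr hcApos
  have hbpos : 0 < b := Real.sqrt_pos.mpr hcBpos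
  have rsmul : ∀ (r : ℝ) (X : Matrix (Fin 2) (Fin 2) ℂ), r • X = (r : ℂ) • X := by
    intro r X; ext i j; simp [Complex.real_smul]
  have hscale : ∀ (c : ℝ) (M : Matrix (Fin 2) (Fin n) ℂ) (cM : ℝ),
      M * Mᴴ = cM • (1 : Matrix (Fin 2) (Fin 2) ℂ) → c * c * cM = 1 →
      ((c : ℂ) • M) * ((c : ℂ) • M)ᴴ = 1 := by
    intro c M cM hM hc
    rw [Matrix.conjTranspose_smul, Matrix.smul_mul, Matrix.mul_smul, hM, rsmul,
      smul_smul, smul_smul]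
    rw [show (star (c : ℂ)) = (c : ℂ) from Complex.conj_ofReal c]
    rw [show (c : ℂ) * (c : ℂ) * (cM : ℂ) = ((c * c * cM : ℝ) : ℂ) by push_cast; ring, hc]
    simp
  have ha2 : a⁻¹ * a⁻¹ * cA = 1 := by
    have : a * a = cA := Real.mul_self_sqrt hcApos.le
    field_simp
    linarith [this]
  have hb2 : b⁻¹ * b⁻¹ * cB = 1 := by
    have : b * b = cB := Real.mul_self_sqrt hcBpos.le
    field_simp
    linarith [this]
  have hA' : (((a⁻¹ : ℝ) : ℂ) • A) * (((a⁻¹ : ℝ) : ℂ) • A)ᴴ = 1 :=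
    hscale a⁻¹ A cA hA0 ha2
  have hB' : (((b⁻¹ : ℝ) : ℂ) • B) * (((b⁻¹ : ℝ) : ℂ) • B)ᴴ = 1 :=
    hscale b⁻¹ B cB hB0 hb2
  obtain ⟨U, hU, hQ⟩ := key_lemma n (((a⁻¹ : ℝ) : ℂ) • A) (((b⁻¹ : ℝ) : ℂ) • B) hA' hB'
  refine ⟨b / a, div_pos hbpos hapos, U, hU, ?_⟩
  have h1 : ((b⁻¹ : ℝ) : ℂ) • B = ((a⁻¹ : ℝ) : ℂ) • (A * U) := by
    rw [hQ, Matrix.smul_mul]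
  have h2 : B = ((b / a : ℝ) : ℂ) • (A * U) := by
    have := congrArg (fun X => ((b : ℝ) : ℂ) • X) h1
    simp only [smul_smul] at this
    rw [show ((b : ℝ) : ℂ) * ((b⁻¹ : ℝ) : ℂ) = 1 by
        norm_cast; exact mul_inv_cancel₀ hbpos.ne'] at this
    rw [show ((b : ℝ) : ℂ) * ((a⁻¹ : ℝ) : ℂ) = ((b / a : ℝ) : ℂ) by push_cast; ring] at this
    simpa using this
  rw [h2]
  ext i j
  simp [Complex.real_smul]
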